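/- (Optimal risk-constrained throughput.) Let (Ω, μ) be a probability space, let C : Ω → ℝ and R_ach : Ω → ℝ be measurable random variables with C ≥ 0 almost surely and 0 ≤ R_ach ≤ 1 almost surely, let a > 0, and let ε_cov, ε_rel ∈ (0,1). Define q_max = min{1, a·Q_C^<(ε_cov)} and R_max = Q_{R_ach}^<(ε_rel). Then q_max·R_max is the greatest element of the set { q·R : 0 ≤ q ≤ 1, 0 ≤ R ≤ 1, P[q > a·C] ≤ ε_cov, P[R > R_ach] ≤ ε_rel }; that is, the pair (q_max, R_max) is feasible and every feasible pair (q, R) satisfies q·R ≤ q_max·R_max. -/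

import Mathlib

open MeasureTheory

/-- The strict-outage quantile `Q_X^<(ε) = sup {x : P[X < x] ≤ ε}`. -/
noncomputable def strictOutageQuantile {Ω : Type*} [MeasurableSpace Ω]
    (μ : Measure Ω) (X : Ω → ℝ) (ε : ℝ) : ℝ :=
  sSup {x : ℝ | (μ {ω | X ω < x}).toReal ≤ ε}

section helpers
variable {Ω : Type*} [MeasurableSpace Ω] (μ : Measure Ω) [IsProbabilityMeasure μ]
  (X : Ω → ℝ) {ε : ℝ}

lemma soq_zero_mem (hX0 : ∀ᵐ ω ∂μ, 0 ≤ X ω) (hε0 : 0 ≤ ε) :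
    (0 : ℝ) ∈ {x : ℝ | (μ {ω | X ω < x}).toReal ≤ ε} := by
  have : μ {ω | X ω < 0} = 0 := by
    have := hX0
    rw [Filter.eventually_iff, mem_ae_iff] at this
    convert this using 2
    ext ω; simp [not_le]
  simp [Set.mem_setOf_eq, this, hε0]

lemma soq_bddAbove (hε1 : ε < 1) :
    BddAbove {x : ℝ | (μ {ω | X ω < x}).toReal ≤ ε} := by
  have hU : (⋃ n : ℕ, {ω | X ω < n}) = Set.univ := by
    ext ω
    simp only [Set.mem_iUnion, Set.mem_univ, iff_true, Set.mem_setOf_eq]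
    exact exists_nat_gt (X ω)
  have hmono : Monotone (fun n : ℕ => {ω | X ω < n}) := by
    intro i j hij ω h
    simp only [Set.mem_setOf_eq] at *
    exact lt_of_lt_of_le h (by exact_mod_cast hij)
  have h1 : Filter.Tendsto (fun n : ℕ => μ {ω | X ω < n}) Filter.atTop (nhds 1) := by
    have := tendsto_measure_iUnion_atTop (μ := μ) hmono
    rwa [hU, measure_univ] at this
  have h2 : Filter.Tendsto (fun n : ℕ => (μ {ω | X ω < n}).toReal) Filter.atTop (nhds 1) := by
    have := (ENNReal.tendsto_toReal (a := 1) (by simp)).comp h1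
    exact this
  have h3 : ∀ᶠ n : ℕ in Filter.atTop, ε < (μ {ω | X ω < n}).toReal :=
    h2.eventually (eventually_gt_nhds hε1)
  obtain ⟨n, hn⟩ := h3.exists
  refine ⟨n, fun x hx => ?_⟩
  by_contra hlt
  push_neg at hlt
  have : (μ {ω | X ω < (n:ℝ)}).toReal ≤ (μ {ω | X ω < x}).toReal :=
    ENNReal.toReal_mono (measure_ne_top μ _)
      (measure_mono (fun ω h => lt_trans h hlt))
  exact absurd (le_trans this hx) (not_le.mpr hn)

lemma soq_mem (hX0 : ∀ᵐ ω ∂μ, 0 ≤ X ω) (hε0 : 0 ≤ ε) (hε1 : ε < 1) :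
    (μ {ω | X ω < strictOutageQuantile μ X ε}).toReal ≤ ε := by
  set S := {x : ℝ | (μ {ω | X ω < x}).toReal ≤ ε} with hS
  have hne : S.Nonempty := ⟨0, soq_zero_mem μ X hX0 hε0⟩
  have hbdd := soq_bddAbove μ X hε1
  set Q := sSup S with hQ
  have hU : {ω | X ω < Q} = ⋃ n : ℕ, {ω | X ω < Q - 1/(n+1)} := by
    ext ω
    simp only [Set.mem_iUnion, Set.mem_setOf_eq]
    constructor
    · intro h
      obtain ⟨n, hn⟩ := exists_nat_one_div_lt (sub_pos.mpr h)
      exact ⟨n, by linarith⟩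
    · rintro ⟨n, hn⟩
      have : (0:ℝ) < 1/(n+1) := by positivity
      linarith
  have hmono : Monotone (fun n : ℕ => {ω | X ω < Q - 1/(n+1)}) := by
    intro i j hij ω h
    have : (1:ℝ)/(j+1) ≤ 1/(i+1) := by
      apply one_div_le_one_div_of_le (by positivity)
      have : (i:ℝ) ≤ j := by exact_mod_cast hij
      linarith
    simp only [Set.mem_setOf_eq] at *
    linarith
  have hterm : ∀ n : ℕ, (μ {ω | X ω < Q - 1/(n+1)}).toReal ≤ ε := by
    intro n
    have hlt : Q - 1/(n+1) < Q := by
      have : (0:ℝ) < 1/(n+1) := by positivity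
      linarith
    obtain ⟨s, hsS, hs⟩ := exists_lt_of_lt_csSup hne hlt
    calc (μ {ω | X ω < Q - 1/(n+1)}).toReal
        ≤ (μ {ω | X ω < s}).toReal :=
          ENNReal.toReal_mono (measure_ne_top μ _)
            (measure_mono (fun ω h => lt_trans h hs))
      _ ≤ ε := hsS
  have h1 : Filter.Tendsto (fun n : ℕ => μ {ω | X ω < Q - 1/(n+1)}) Filter.atTop
      (nhds (μ {ω | X ω < Q})) := by
    have := tendsto_measure_iUnion_atTop (μ := μ) hmono
    rwa [← hU] at this
  have h2 : Filter.Tendsto (fun n : ℕ => (μ {ω | X ω < Q - 1/(n+1)}).toReal) Filter.atTop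
      (nhds ((μ {ω | X ω < Q}).toReal)) :=
    (ENNReal.tendsto_toReal (measure_ne_top μ _)).comp h1
  exact le_of_tendsto h2 (Filter.Eventually.of_forall hterm)

end helpers

/-- Optimal risk-constrained throughput: with
`q_max = min {1, a·Q_C^<(ε_cov)}` and `R_max = Q_{R_ach}^<(ε_rel)`, the value
`q_max · R_max` is the greatest element of the set of feasible throughputs
`{ q·R : 0 ≤ q ≤ 1, 0 ≤ R ≤ 1, P[q > a·C] ≤ ε_cov, P[R > R_ach] ≤ ε_rel }`. -/
theorem optimal_risk_constrained_throughput {Ω : Type*} [MeasurableSpace Ω]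
    (μ : Measure Ω) [IsProbabilityMeasure μ]
    (C Rach : Ω → ℝ) (hC : Measurable C) (hRach : Measurable Rach)
    (hC0 : ∀ᵐ ω ∂μ, 0 ≤ C ω)
    (hRach0 : ∀ᵐ ω ∂μ, 0 ≤ Rach ω) (hRach1 : ∀ᵐ ω ∂μ, Rach ω ≤ 1)
    (a : ℝ) (ha : 0 < a)
    (εcov εrel : ℝ) (hεcov : εcov ∈ Set.Ioo (0 : ℝ) 1) (hεrel : εrel ∈ Set.Ioo (0 : ℝ) 1) :
    IsGreatest
      { t : ℝ | ∃ q R : ℝ, 0 ≤ q ∧ q ≤ 1 ∧ 0 ≤ R ∧ R ≤ 1 ∧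
          (μ {ω | q > a * C ω}).toReal ≤ εcov ∧
          (μ {ω | R > Rach ω}).toReal ≤ εrel ∧ t = q * R }
      (min 1 (a * strictOutageQuantile μ C εcov) * strictOutageQuantile μ Rach εrel) := by
  obtain ⟨hεc0, hεc1⟩ := hεcov
  obtain ⟨hεr0, hεr1⟩ := hεrel
  have hSC_bdd := soq_bddAbove μ C hεc1
  have hSR_bdd := soq_bddAbove μ Rach hεr1
  have hSR_ne : {x : ℝ | (μ {ω | Rach ω < x}).toReal ≤ εrel}.Nonempty :=
    ⟨0, soq_zero_mem μ Rach hRach0 hεr0.le⟩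
  have hQC0 : 0 ≤ strictOutageQuantile μ C εcov :=
    le_csSup hSC_bdd (soq_zero_mem μ C hC0 hεc0.le)
  have hQR0 : 0 ≤ strictOutageQuantile μ Rach εrel :=
    le_csSup hSR_bdd (soq_zero_mem μ Rach hRach0 hεr0.le)
  have hQR1 : strictOutageQuantile μ Rach εrel ≤ 1 := by
    apply csSup_le hSR_ne
    intro x hx
    by_contra hlt
    push_neg at hlt
    have hae : ∀ᵐ ω ∂μ, ω ∈ {ω | Rach ω < x} :=
      hRach1.mono (fun ω h => lt_of_le_of_lt h hlt)
    have h1 : μ {ω | Rach ω < x} = 1 := by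
      have heq : {ω | Rach ω < x} =ᵐ[μ] Set.univ := by
        rw [Filter.eventuallyEq_univ]
        exact hae
      rw [measure_congr heq, measure_univ]
    rw [Set.mem_setOf_eq, h1] at hx
    simp at hx
    linarith
  have hqmax0 : 0 ≤ min 1 (a * strictOutageQuantile μ C εcov) :=
    le_min zero_le_one (mul_nonneg ha.le hQC0)
  constructor
  · -- membership: (q_max, R_max) is feasible
    refine ⟨min 1 (a * strictOutageQuantile μ C εcov), strictOutageQuantile μ Rach εrel,
      hqmax0, min_le_left _ _, hQR0, hQR1, ?_, ?_, rfl⟩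
    · have key := soq_mem μ C hC0 hεc0.le hεc1
      refine le_trans (ENNReal.toReal_mono (measure_ne_top μ _) (measure_mono ?_)) key
      intro ω h
      simp only [Set.mem_setOf_eq, gt_iff_lt] at *
      have : a * C ω < a * strictOutageQuantile μ C εcov :=
        lt_of_lt_of_le h (min_le_right _ _)
      exact lt_of_mul_lt_mul_left this ha.le
    · exact soq_mem μ Rach hRach0 hεr0.le hεr1
  · -- upper bound
    rintro t ⟨q, R, hq0, hq1, hR0, hR1, hqc, hRr, rfl⟩
    have hRle : R ≤ strictOutageQuantile μ Rach εrel := le_csSup hSR_bdd hRr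
    have hqle : q ≤ a * strictOutageQuantile μ C εcov := by
      rw [strictOutageQuantile]
      have hmem : q / a ∈ {x : ℝ | (μ {ω | C ω < x}).toReal ≤ εcov} := by
        have hseteq : {ω | C ω < q / a} = {ω | q > a * C ω} := by
          ext ω
          simp only [Set.mem_setOf_eq, gt_iff_lt, lt_div_iff₀ ha, mul_comm]
        simpa [Set.mem_setOf_eq, hseteq] using hqc
      have := le_csSup hSC_bdd hmem
      rw [div_le_iff₀ ha] at this
      linarith [this]
    exact mul_le_mul (le_min hq1 hqle) hRle hR0 hqmax0
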